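/- For every k ∈ ℕ and every integer i with 0 ≤ i < 2^k, the value v(i) is an integer multiple of 2^{-k}, and the map i ↦ v(i) is a bijection from {0, 1, ..., 2^k - 1} onto {0, 2^{-k}, 2·2^{-k}, ..., (2^k - 1)·2^{-k}}. -/
import Mathlib


/-- The van der Corput radical-inverse function: reverse the binary digits of `i`
across the radix point. -/
noncomputable def vdc (i : ℕ) : ℝ :=
  ∑' j : ℕ, if i.testBit j then ((2 : ℝ) ^ (j + 1))⁻¹ else 0

/-- Bit reversal of `i` over `k` bits. -/
def vdcRev : ℕ → ℕ → ℕ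
  | 0, _ => 0
  | k + 1, i => i % 2 * 2 ^ k + vdcRev k (i / 2)

lemma vdcRev_lt (k : ℕ) : ∀ i, vdcRev k i < 2 ^ k := by
  induction k with
  | zero => intro i; simp [vdcRev]
  | succ k ih =>
    intro i
    have h1 := ih (i / 2)
    have h2 : i % 2 ≤ 1 := by omega
    have : i % 2 * 2 ^ k ≤ 2 ^ k := by
      calc i % 2 * 2 ^ k ≤ 1 * 2 ^ k := Nat.mul_le_mul_right _ h2
      _ = 2 ^ k := one_mul _
    simp only [vdcRev, pow_succ]
    omega

lemma vdc_sum_eq (k : ℕ) : ∀ i : ℕ,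
    ∑ j ∈ Finset.range k, (if i.testBit j then ((2 : ℝ) ^ (j + 1))⁻¹ else 0)
      = (vdcRev k i : ℝ) / 2 ^ k := by
  induction k with
  | zero => intro i; simp [vdcRev]
  | succ k ih =>
    intro i
    rw [Finset.sum_range_succ']
    have h1 : ∀ j ∈ Finset.range k,
        (if i.testBit (j + 1) then ((2 : ℝ) ^ (j + 1 + 1))⁻¹ else 0)
          = (if (i / 2).testBit j then ((2 : ℝ) ^ (j + 1))⁻¹ else 0) * 2⁻¹ := by
      intro j _
      rw [Nat.testBit_succ]
      by_cases h : (i / 2).testBit j <;> simp [h, pow_succ, mul_inv] <;> ring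
    rw [Finset.sum_congr rfl h1, ← Finset.sum_mul, ih]
    have hb : (if i.testBit 0 then ((2 : ℝ) ^ (0 + 1))⁻¹ else 0) = ((i % 2 : ℕ) : ℝ) / 2 := by
      rw [Nat.testBit_zero]
      rcases Nat.mod_two_eq_zero_or_one i with h | h <;> simp [h]
    rw [hb]
    simp only [vdcRev, Nat.cast_add, Nat.cast_mul, Nat.cast_pow, Nat.cast_ofNat, pow_succ]
    have : (2 : ℝ) ^ k ≠ 0 := by positivity
    field_simp
    ring

lemma vdc_eq (k i : ℕ) (hi : i < 2 ^ k) : vdc i = (vdcRev k i : ℝ) / 2 ^ k := by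
  rw [vdc, tsum_eq_sum (s := Finset.range k), vdc_sum_eq]
  intro j hj
  simp only [Finset.mem_range, not_lt] at hj
  have : i < 2 ^ j := lt_of_lt_of_le hi (Nat.pow_le_pow_right (by norm_num) hj)
  rw [Nat.testBit_eq_false_of_lt this]
  simp

lemma vdcRev_injOn (k : ℕ) : ∀ i < 2 ^ k, ∀ i' < 2 ^ k, vdcRev k i = vdcRev k i' → i = i' := by
  induction k with
  | zero => intro i hi i' hi' _; omega
  | succ k ih =>
    intro i hi i' hi' h
    simp only [vdcRev] at h
    have h1 := vdcRev_lt k (i / 2)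
    have h2 := vdcRev_lt k (i' / 2)
    have hm : i % 2 = i' % 2 ∧ vdcRev k (i / 2) = vdcRev k (i' / 2) := by
      rcases Nat.mod_two_eq_zero_or_one i with ha | ha <;>
        rcases Nat.mod_two_eq_zero_or_one i' with hb | hb <;>
        simp [ha, hb] at h ⊢ <;> omega
    have hd : i / 2 = i' / 2 := by
      apply ih (i / 2) _ (i' / 2) _ hm.2 <;>
      · rw [pow_succ] at *; omega
    omega

lemma vdcRev_surjOn (k : ℕ) : ∀ m < 2 ^ k, ∃ i < 2 ^ k, vdcRev k i = m := by
  induction k with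
  | zero => intro m hm; exact ⟨0, by omega, by simp [vdcRev]; omega⟩
  | succ k ih =>
    intro m hm
    rw [pow_succ] at hm
    have hr : m % 2 ^ k < 2 ^ k := Nat.mod_lt _ (by positivity)
    obtain ⟨i', hi', hrev⟩ := ih (m % 2 ^ k) hr
    obtain ⟨b, hb1, hmeq⟩ : ∃ b, b ≤ 1 ∧ m = b * 2 ^ k + m % 2 ^ k := by
      refine ⟨m / 2 ^ k, ?_, ?_⟩
      · have h2 : m / 2 ^ k < 2 := (Nat.div_lt_iff_lt_mul (by positivity)).mpr (by omega)
        omega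
      · rw [Nat.mul_comm]; exact (Nat.div_add_mod m (2 ^ k)).symm
    refine ⟨2 * i' + b, by rw [pow_succ]; omega, ?_⟩
    simp only [vdcRev]
    have h1 : (2 * i' + b) % 2 = b := by omega
    have h2 : (2 * i' + b) / 2 = i' := by omega
    rw [h1, h2, hrev]
    exact hmeq.symm

/-- For every `k`, each `v(i)` with `i < 2^k` is an integer multiple of `2^{-k}`, and
`i ↦ v(i)` is a bijection from `{0,…,2^k-1}` onto `{m·2^{-k} : 0 ≤ m < 2^k}`. -/
theorem vdc_bijOn (k : ℕ) :
    (∀ i < 2 ^ k, ∃ m : ℕ, vdc i = (m : ℝ) * ((2 : ℝ) ^ k)⁻¹) ∧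
    Set.BijOn vdc {i : ℕ | i < 2 ^ k}
      {x : ℝ | ∃ m : ℕ, m < 2 ^ k ∧ x = (m : ℝ) * ((2 : ℝ) ^ k)⁻¹} := by
  have h2k : (2 : ℝ) ^ k ≠ 0 := by positivity
  constructor
  · intro i hi
    exact ⟨vdcRev k i, by rw [vdc_eq k i hi, div_eq_mul_inv]⟩
  · refine ⟨?_, ?_, ?_⟩
    · intro i hi
      exact ⟨vdcRev k i, vdcRev_lt k i, by rw [vdc_eq k i hi, div_eq_mul_inv]⟩
    · intro i hi i' hi' h
      simp only [Set.mem_setOf_eq] at hi hi'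
      rw [vdc_eq k i hi, vdc_eq k i' hi'] at h
      have : (vdcRev k i : ℝ) = vdcRev k i' := by
        field_simp at h; exact_mod_cast h
      exact vdcRev_injOn k i hi i' hi' (by exact_mod_cast this)
    · rintro x ⟨m, hm, rfl⟩
      obtain ⟨i, hi, hrev⟩ := vdcRev_surjOn k m hm
      exact ⟨i, hi, by rw [vdc_eq k i hi, hrev, div_eq_mul_inv]⟩
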